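/- (Telescoping lemma, finite-state version) Let M and M̂ be two MDPs sharing state space S, action space A, reward functions R, R̂ : S×A → ℝ, transition kernels T, T̂, and discount γ ∈ [0,1). Fix a policy π and define G(s,a) = E_{s'∼T̂(·|s,a)}[γ V_M^π(s')] + R̂(s,a) − E_{s'∼T(·|s,a)}[γ V_M^π(s')] − R(s,a), where V_M^π is the value function of π in M. Then E_{(s,a)∼ρ_{T̂}^π}[G(s,a)] = η_{M̂}(π) − η_M(π), where ρ_{T̂}^π is the (normalized by 1−γ appropriately) discounted state-action occupancy of π under T̂ and η denotes expected discounted return from the initial distribution. -/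

import Mathlib

open Finset

variable {S A : Type*} [Fintype S] [Fintype A]

/-- State distribution at time `t` of the Markov chain induced by policy `π`
and transition kernel `T`, started from initial distribution `μ`. -/
noncomputable def stateDist (T : S → A → S → ℝ) (π : S → A → ℝ)
    (μ : S → ℝ) : ℕ → S → ℝ
  | 0 => μ
  | (t + 1) => fun s' => ∑ s, ∑ a, stateDist T π μ t s * π s a * T s a s'

/-- Dirac initial distribution at `s` (requires decidable equality). -/
noncomputable def diracDist [DecidableEq S] (s : S) : S → ℝ :=
  fun s' => if s' = s then 1 else 0

/-- Value function `V^π_M(s)`: expected discounted return of policy `π` under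
kernel `T` and reward `R`, started from state `s`. -/
noncomputable def valueFn [DecidableEq S] (T : S → A → S → ℝ) (R : S → A → ℝ)
    (γ : ℝ) (π : S → A → ℝ) (s : S) : ℝ :=
  ∑' t : ℕ, γ ^ t * ∑ s', ∑ a, stateDist T π (diracDist s) t s' * π s' a * R s' a

/-- Expected discounted return `η_M(π)` from initial distribution `μ₀`. -/
noncomputable def expReturn [DecidableEq S] (T : S → A → S → ℝ) (R : S → A → ℝ)
    (γ : ℝ) (π : S → A → ℝ) (μ₀ : S → ℝ) : ℝ :=
  ∑ s, μ₀ s * valueFn T R γ π s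

/-- Discounted state-action occupancy `ρ_T^π(s,a) = ∑_t γ^t P(s_t = s, a_t = a)`. -/
noncomputable def occupancy (T : S → A → S → ℝ) (π : S → A → ℝ)
    (μ₀ : S → ℝ) (γ : ℝ) (s : S) (a : A) : ℝ :=
  ∑' t : ℕ, γ ^ t * stateDist T π μ₀ t s * π s a

/-- per-step expected reward -/
noncomputable def rew (T : S → A → S → ℝ) (R : S → A → ℝ) (π : S → A → ℝ)
    (μ : S → ℝ) (t : ℕ) : ℝ :=
  ∑ s', ∑ a, stateDist T π μ t s' * π s' a * R s' a

section basic
variable (T : S → A → S → ℝ) (π : S → A → ℝ) (μ : S → ℝ)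

lemma stateDist_nonneg (hT0 : ∀ s a s', 0 ≤ T s a s') (hπ0 : ∀ s a, 0 ≤ π s a)
    (hμ : ∀ s, 0 ≤ μ s) : ∀ t s, 0 ≤ stateDist T π μ t s := by
  intro t
  induction t with
  | zero => exact hμ
  | succ t ih =>
    intro s'
    simp only [stateDist]
    refine Finset.sum_nonneg fun s _ => Finset.sum_nonneg fun a _ => ?_
    exact mul_nonneg (mul_nonneg (ih s) (hπ0 s a)) (hT0 s a s')

lemma stateDist_sum_one (hT1 : ∀ s a, ∑ s', T s a s' = 1) (hπ1 : ∀ s, ∑ a, π s a = 1)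
    (hμ : ∑ s, μ s = 1) : ∀ t, ∑ s, stateDist T π μ t s = 1 := by
  intro t
  induction t with
  | zero => exact hμ
  | succ t ih =>
    simp only [stateDist]
    rw [Finset.sum_comm]
    have h : ∀ s, (∑ s', ∑ a, stateDist T π μ t s * π s a * T s a s') = stateDist T π μ t s := by
      intro s
      rw [Finset.sum_comm]
      simp only [← Finset.mul_sum, hT1, mul_one, hπ1]
    simp only [h, ih]

lemma stateDist_le_one (hT0 : ∀ s a s', 0 ≤ T s a s')
    (hT1 : ∀ s a, ∑ s', T s a s' = 1) (hπ0 : ∀ s a, 0 ≤ π s a)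
    (hπ1 : ∀ s, ∑ a, π s a = 1) (hμ0 : ∀ s, 0 ≤ μ s) (hμ1 : ∑ s, μ s = 1)
    (t : ℕ) (s : S) : stateDist T π μ t s ≤ 1 := by
  calc stateDist T π μ t s ≤ ∑ s', stateDist T π μ t s' :=
        Finset.single_le_sum (fun s' _ => stateDist_nonneg T π μ hT0 hπ0 hμ0 t s')
          (Finset.mem_univ s)
    _ = 1 := stateDist_sum_one T π μ hT1 hπ1 hμ1 t

lemma stateDist_eq_sum_dirac [DecidableEq S] :
    ∀ t s', stateDist T π μ t s' = ∑ s0, μ s0 * stateDist T π (diracDist s0) t s' := by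
  intro t
  induction t with
  | zero =>
    intro s'
    simp [stateDist, diracDist, mul_ite, Finset.sum_ite_eq]
  | succ t ih =>
    intro s'
    simp only [stateDist, ih]
    have key : ∀ s, (∑ a, (∑ s0, μ s0 * stateDist T π (diracDist s0) t s) * π s a * T s a s')
        = ∑ s0, μ s0 * (∑ a, stateDist T π (diracDist s0) t s * π s a * T s a s') := by
      intro s
      simp only [Finset.sum_mul]
      rw [Finset.sum_comm]
      simp only [mul_assoc, ← Finset.mul_sum]
    rw [Finset.sum_congr rfl (fun s _ => key s), Finset.sum_comm]
    simp only [← Finset.mul_sum]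

lemma stateDist_succ_shift :
    ∀ t, stateDist T π μ (t + 1) = stateDist T π (stateDist T π μ 1) t := by
  intro t
  induction t with
  | zero => rfl
  | succ t ih =>
    funext s'
    show (∑ s, ∑ a, stateDist T π μ (t + 1) s * π s a * T s a s') = _
    rw [ih]
    rfl

end basic

lemma summable_geom_mul {γ : ℝ} (hγ0 : 0 ≤ γ) (hγ1 : γ < 1) {f : ℕ → ℝ} {C : ℝ}
    (hf : ∀ t, |f t| ≤ C) : Summable (fun t => γ ^ t * f t) := by
  apply Summable.of_norm
  refine Summable.of_nonneg_of_le (fun t => norm_nonneg _) (fun t => ?_)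
    ((summable_geometric_of_lt_one hγ0 hγ1).mul_right C)
  rw [norm_mul, norm_pow, Real.norm_eq_abs, Real.norm_eq_abs, abs_of_nonneg hγ0]
  exact mul_le_mul_of_nonneg_left (hf t) (pow_nonneg hγ0 t)

section rewbd
variable (T : S → A → S → ℝ) (R : S → A → ℝ) (π : S → A → ℝ) (μ : S → ℝ)
variable (hT0 : ∀ s a s', 0 ≤ T s a s') (hT1 : ∀ s a, ∑ s', T s a s' = 1)
variable (hπ0 : ∀ s a, 0 ≤ π s a) (hπ1 : ∀ s, ∑ a, π s a = 1)
variable (hμ0 : ∀ s, 0 ≤ μ s) (hμ1 : ∑ s, μ s = 1)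

include hT0 hT1 hπ0 hπ1 hμ0 hμ1 in
lemma rew_abs_le (t : ℕ) : |rew T R π μ t| ≤ ∑ s', ∑ a, |R s' a| := by
  have h1 : ∀ s a, π s a ≤ 1 := fun s a =>
    (Finset.single_le_sum (fun a _ => hπ0 s a) (Finset.mem_univ a)).trans_eq (hπ1 s)
  calc |rew T R π μ t| ≤ ∑ s', |∑ a, stateDist T π μ t s' * π s' a * R s' a| :=
        Finset.abs_sum_le_sum_abs _ _
    _ ≤ ∑ s', ∑ a, |stateDist T π μ t s' * π s' a * R s' a| :=
        Finset.sum_le_sum fun s' _ => Finset.abs_sum_le_sum_abs _ _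
    _ ≤ ∑ s', ∑ a, |R s' a| := by
        refine Finset.sum_le_sum fun s' _ => Finset.sum_le_sum fun a _ => ?_
        rw [abs_mul, abs_mul]
        have hd0 := stateDist_nonneg T π μ hT0 hπ0 hμ0 t s'
        have hd1 := stateDist_le_one T π μ hT0 hT1 hπ0 hπ1 hμ0 hμ1 t s'
        have : |stateDist T π μ t s'| * |π s' a| ≤ 1 := by
          rw [abs_of_nonneg hd0, abs_of_nonneg (hπ0 s' a)]
          exact mul_le_one₀ hd1 (hπ0 s' a) (h1 s' a)
        calc |stateDist T π μ t s'| * |π s' a| * |R s' a| ≤ 1 * |R s' a| :=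
              mul_le_mul_of_nonneg_right this (abs_nonneg _)
          _ = |R s' a| := one_mul _

include hT0 hT1 hπ0 hπ1 hμ0 hμ1 in
lemma summable_rew {γ : ℝ} (hγ0 : 0 ≤ γ) (hγ1 : γ < 1) :
    Summable (fun t => γ ^ t * rew T R π μ t) :=
  summable_geom_mul hγ0 hγ1 (fun t => rew_abs_le T R π μ hT0 hT1 hπ0 hπ1 hμ0 hμ1 t)

end rewbd

section main
variable [DecidableEq S]
variable (T : S → A → S → ℝ) (R : S → A → ℝ) (π : S → A → ℝ) (μ₀ : S → ℝ)
variable {γ : ℝ}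
variable (hT0 : ∀ s a s', 0 ≤ T s a s') (hT1 : ∀ s a, ∑ s', T s a s' = 1)
variable (hπ0 : ∀ s a, 0 ≤ π s a) (hπ1 : ∀ s, ∑ a, π s a = 1)
variable (hμ0 : ∀ s, 0 ≤ μ₀ s) (hμ1 : ∑ s, μ₀ s = 1)

lemma diracDist_nonneg (s s' : S) : 0 ≤ diracDist s s' := by
  unfold diracDist; split <;> norm_num

lemma diracDist_sum_one (s : S) : ∑ s', diracDist s s' = 1 := by
  simp [diracDist]

lemma valueFn_eq_tsum_rew (s : S) :
    valueFn T R γ π s = ∑' t, γ ^ t * rew T R π (diracDist s) t := rfl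

/-- linearity of `rew` in the initial distribution -/
lemma rew_eq_sum_dirac (t : ℕ) :
    rew T R π μ₀ t = ∑ s0, μ₀ s0 * rew T R π (diracDist s0) t := by
  unfold rew
  have h1 : ∀ s', (∑ a, stateDist T π μ₀ t s' * π s' a * R s' a)
      = ∑ s0, ∑ a, μ₀ s0 * (stateDist T π (diracDist s0) t s' * π s' a * R s' a) := by
    intro s'
    rw [Finset.sum_comm]
    refine Finset.sum_congr rfl fun a _ => ?_
    rw [stateDist_eq_sum_dirac T π μ₀ t s', Finset.sum_mul, Finset.sum_mul]
    exact Finset.sum_congr rfl fun s0 _ => by ring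
  rw [Finset.sum_congr rfl fun s' _ => h1 s', Finset.sum_comm]
  simp only [← Finset.mul_sum]

include hT0 hT1 hπ0 hπ1 hμ0 hμ1 in
lemma expReturn_eq_tsum (hγ0 : 0 ≤ γ) (hγ1 : γ < 1) :
    expReturn T R γ π μ₀ = ∑' t, γ ^ t * rew T R π μ₀ t := by
  have hsum : ∀ s0 : S, Summable (fun t => γ ^ t * (μ₀ s0 * rew T R π (diracDist s0) t)) := by
    intro s0
    have := (summable_rew T R π (diracDist s0) hT0 hT1 hπ0 hπ1
      (diracDist_nonneg s0) (diracDist_sum_one s0) hγ0 hγ1).mul_left (μ₀ s0)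
    convert this using 2 with t
    · rfl
    ring
  calc expReturn T R γ π μ₀
      = ∑ s0, ∑' t, γ ^ t * (μ₀ s0 * rew T R π (diracDist s0) t) := by
        unfold expReturn
        refine Finset.sum_congr rfl fun s0 _ => ?_
        rw [valueFn_eq_tsum_rew, ← tsum_mul_left]
        exact tsum_congr fun t => by ring
    _ = ∑' t, ∑ s0, γ ^ t * (μ₀ s0 * rew T R π (diracDist s0) t) :=
        (Summable.tsum_finsetSum fun s0 _ => hsum s0).symm
    _ = ∑' t, γ ^ t * rew T R π μ₀ t := by
        refine tsum_congr fun t => ?_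
        rw [rew_eq_sum_dirac T R π μ₀ t, Finset.mul_sum]

lemma rew_succ (μ : S → ℝ) (t : ℕ) :
    rew T R π μ (t + 1) = rew T R π (stateDist T π μ 1) t := by
  unfold rew
  rw [stateDist_succ_shift]

lemma stateDist_dirac_one (s s' : S) :
    stateDist T π (diracDist s) 1 s' = ∑ a, π s a * T s a s' := by
  show (∑ s0, ∑ a, diracDist s s0 * π s0 a * T s0 a s') = _
  rw [Finset.sum_comm]
  simp [diracDist, ite_mul, one_mul, zero_mul, Finset.sum_ite_eq']

include hT0 hT1 hπ0 hπ1 in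
lemma bellman (hγ0 : 0 ≤ γ) (hγ1 : γ < 1) (s : S) :
    ∑ a, π s a * (R s a + ∑ s', T s a s' * (γ * valueFn T R γ π s'))
      = valueFn T R γ π s := by
  have hsum := summable_rew T R π (diracDist s) hT0 hT1 hπ0 hπ1
    (diracDist_nonneg s) (diracDist_sum_one s) hγ0 hγ1
  have hμ1nn : ∀ s', 0 ≤ stateDist T π (diracDist s) 1 s' := fun s' =>
    stateDist_nonneg T π (diracDist s) hT0 hπ0 (diracDist_nonneg s) 1 s'
  have hμ1one : ∑ s', stateDist T π (diracDist s) 1 s' = 1 :=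
    stateDist_sum_one T π (diracDist s) hT1 hπ1 (diracDist_sum_one s) 1
  rw [valueFn_eq_tsum_rew, Summable.tsum_eq_zero_add hsum]
  have e1 : (γ : ℝ) ^ 0 * rew T R π (diracDist s) 0 = ∑ a, π s a * R s a := by
    rw [pow_zero, one_mul]
    show (∑ s', ∑ a, diracDist s s' * π s' a * R s' a) = _
    rw [Finset.sum_comm]
    simp [diracDist, ite_mul, one_mul, zero_mul, Finset.sum_ite_eq']
  have e2 : (∑' t, γ ^ (t + 1) * rew T R π (diracDist s) (t + 1))
      = γ * ∑ s', stateDist T π (diracDist s) 1 s' * valueFn T R γ π s' := by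
    calc (∑' t, γ ^ (t + 1) * rew T R π (diracDist s) (t + 1))
        = ∑' t, γ * (γ ^ t * rew T R π (stateDist T π (diracDist s) 1) t) := by
          refine tsum_congr fun t => ?_
          rw [rew_succ T R π (diracDist s) t]; ring
      _ = γ * ∑' t, γ ^ t * rew T R π (stateDist T π (diracDist s) 1) t := tsum_mul_left
      _ = γ * expReturn T R γ π (stateDist T π (diracDist s) 1) := by
          rw [expReturn_eq_tsum T R π (stateDist T π (diracDist s) 1)
            hT0 hT1 hπ0 hπ1 hμ1nn hμ1one hγ0 hγ1]
      _ = γ * ∑ s', stateDist T π (diracDist s) 1 s' * valueFn T R γ π s' := rfl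
  rw [e1, e2]
  simp only [mul_add, Finset.sum_add_distrib]
  congr 1
  calc ∑ a, π s a * ∑ s', T s a s' * (γ * valueFn T R γ π s')
      = ∑ a, ∑ s', γ * (π s a * T s a s' * valueFn T R γ π s') := by
        refine Finset.sum_congr rfl fun a _ => ?_
        rw [Finset.mul_sum]
        exact Finset.sum_congr rfl fun s' _ => by ring
    _ = ∑ s', ∑ a, γ * (π s a * T s a s' * valueFn T R γ π s') := Finset.sum_comm
    _ = γ * ∑ s', stateDist T π (diracDist s) 1 s' * valueFn T R γ π s' := by
        rw [Finset.mul_sum]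
        refine Finset.sum_congr rfl fun s' _ => ?_
        rw [stateDist_dirac_one, Finset.sum_mul, Finset.mul_sum]

end main

/-- Telescoping lemma (finite-state version). For MDPs `M = (T,R)`
and `M̂ = (T̂,R̂)` sharing `S`, `A`, `γ` and initial distribution `μ₀`, and the
mismatch `G(s,a) = E_{s'∼T̂}[γ V_M^π(s')] + R̂(s,a) − E_{s'∼T}[γ V_M^π(s')] − R(s,a)`,
we have `E_{(s,a)∼ρ_{T̂}^π}[G] = η_{M̂}(π) − η_M(π)`. -/
theorem telescoping_lemma [DecidableEq S] [Nonempty S] [Nonempty A]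
    (T That : S → A → S → ℝ) (R Rhat : S → A → ℝ)
    (γ : ℝ) (hγ0 : 0 ≤ γ) (hγ1 : γ < 1)
    (π : S → A → ℝ) (μ₀ : S → ℝ)
    (hT0 : ∀ s a s', 0 ≤ T s a s') (hT1 : ∀ s a, ∑ s', T s a s' = 1)
    (hThat0 : ∀ s a s', 0 ≤ That s a s') (hThat1 : ∀ s a, ∑ s', That s a s' = 1)
    (hπ0 : ∀ s a, 0 ≤ π s a) (hπ1 : ∀ s, ∑ a, π s a = 1)
    (hμ0 : ∀ s, 0 ≤ μ₀ s) (hμ1 : ∑ s, μ₀ s = 1)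
    (G : S → A → ℝ)
    (hG : ∀ s a, G s a
      = (∑ s', That s a s' * (γ * valueFn T R γ π s')) + Rhat s a
        - (∑ s', T s a s' * (γ * valueFn T R γ π s')) - R s a) :
    (∑ s, ∑ a, occupancy That π μ₀ γ s a * G s a)
      = expReturn That Rhat γ π μ₀ - expReturn T R γ π μ₀ := by
  set V : S → ℝ := valueFn T R γ π with hV
  set ρ : ℕ → S → ℝ := stateDist That π μ₀ with hρ
  have hρ0 : ∀ t s, 0 ≤ ρ t s := stateDist_nonneg That π μ₀ hThat0 hπ0 hμ0
  have hρle : ∀ t s, ρ t s ≤ 1 := fun t s =>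
    stateDist_le_one That π μ₀ hThat0 hThat1 hπ0 hπ1 hμ0 hμ1 t s
  have hπle : ∀ s a, π s a ≤ 1 := fun s a =>
    (Finset.single_le_sum (fun a _ => hπ0 s a) (Finset.mem_univ a)).trans_eq (hπ1 s)
  -- per-(s,a) summability
  have hsum1 : ∀ s a, Summable (fun t => γ ^ t * ρ t s * π s a * G s a) := by
    intro s a
    have : ∀ t, |ρ t s * π s a * G s a| ≤ |G s a| := by
      intro t
      rw [abs_mul, abs_mul, abs_of_nonneg (hρ0 t s), abs_of_nonneg (hπ0 s a)]
      have h1 : ρ t s * π s a ≤ 1 := mul_le_one₀ (hρle t s) (hπ0 s a) (hπle s a)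
      calc ρ t s * π s a * |G s a| ≤ 1 * |G s a| :=
            mul_le_mul_of_nonneg_right h1 (abs_nonneg _)
        _ = |G s a| := one_mul _
    have h := summable_geom_mul hγ0 hγ1 this
    exact h.congr fun t => by ring
  -- Step A : exchange sums
  have stepA : (∑ s, ∑ a, occupancy That π μ₀ γ s a * G s a)
      = ∑' t, γ ^ t * ∑ s, ∑ a, ρ t s * π s a * G s a := by
    have h1 : ∀ s a, occupancy That π μ₀ γ s a * G s a
        = ∑' t, γ ^ t * ρ t s * π s a * G s a := by
      intro s a
      unfold occupancy
      rw [← tsum_mul_right]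
    simp only [h1]
    have h2 : ∀ s : S, (∑ a, ∑' t, γ ^ t * ρ t s * π s a * G s a)
        = ∑' t, ∑ a, γ ^ t * ρ t s * π s a * G s a :=
      fun s => (Summable.tsum_finsetSum (fun a _ => hsum1 s a)).symm
    rw [Finset.sum_congr rfl fun s _ => h2 s,
      ← Summable.tsum_finsetSum (fun s _ => summable_sum (fun a _ => hsum1 s a))]
    refine tsum_congr fun t => ?_
    rw [Finset.mul_sum]
    refine Finset.sum_congr rfl fun s _ => ?_
    rw [Finset.mul_sum]
    exact Finset.sum_congr rfl fun a _ => by ring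
  -- Bellman in the needed form
  have hb : ∀ s, (∑ a, π s a * (R s a + ∑ s', T s a s' * (γ * V s'))) = V s := by
    intro s
    rw [hV]
    exact bellman T R π hT0 hT1 hπ0 hπ1 hγ0 hγ1 s
  -- Step B : per-step identity
  have stepB : ∀ t, (∑ s, ∑ a, ρ t s * π s a * G s a)
      = rew That Rhat π μ₀ t + γ * (∑ s', ρ (t + 1) s' * V s') - ∑ s, ρ t s * V s := by
    intro t
    have hsplit : ∀ s a, ρ t s * π s a * G s a
        = ρ t s * π s a * Rhat s a
          + ρ t s * π s a * (∑ s', That s a s' * (γ * V s'))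
          - ρ t s * π s a * (R s a + ∑ s', T s a s' * (γ * V s')) := by
      intro s a
      rw [hG s a]; ring
    have piece1 : (∑ s, ∑ a, ρ t s * π s a * Rhat s a) = rew That Rhat π μ₀ t := rfl
    have piece2 : (∑ s, ∑ a, ρ t s * π s a * (∑ s', That s a s' * (γ * V s')))
        = γ * ∑ s', ρ (t + 1) s' * V s' := by
      calc (∑ s, ∑ a, ρ t s * π s a * (∑ s', That s a s' * (γ * V s')))
          = ∑ s, ∑ a, ∑ s', γ * (ρ t s * π s a * That s a s' * V s') := by
            refine Finset.sum_congr rfl fun s _ => Finset.sum_congr rfl fun a _ => ?_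
            rw [Finset.mul_sum]
            exact Finset.sum_congr rfl fun s' _ => by ring
        _ = ∑ s, ∑ s', ∑ a, γ * (ρ t s * π s a * That s a s' * V s') :=
            Finset.sum_congr rfl fun s _ => Finset.sum_comm
        _ = ∑ s', ∑ s, ∑ a, γ * (ρ t s * π s a * That s a s' * V s') := Finset.sum_comm
        _ = γ * ∑ s', ρ (t + 1) s' * V s' := by
            rw [Finset.mul_sum]
            refine Finset.sum_congr rfl fun s' _ => ?_
            have hnext : ρ (t + 1) s' = ∑ s, ∑ a, ρ t s * π s a * That s a s' := rfl
            rw [hnext, Finset.sum_mul, Finset.mul_sum]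
            refine Finset.sum_congr rfl fun s _ => ?_
            rw [Finset.sum_mul, Finset.mul_sum]
    have piece3 : (∑ s, ∑ a, ρ t s * π s a * (R s a + ∑ s', T s a s' * (γ * V s')))
        = ∑ s, ρ t s * V s := by
      refine Finset.sum_congr rfl fun s _ => ?_
      rw [← hb s, Finset.mul_sum]
      exact Finset.sum_congr rfl fun a _ => by ring
    calc (∑ s, ∑ a, ρ t s * π s a * G s a)
        = (∑ s, ∑ a, (ρ t s * π s a * Rhat s a
            + ρ t s * π s a * (∑ s', That s a s' * (γ * V s'))))
          - ∑ s, ∑ a, ρ t s * π s a * (R s a + ∑ s', T s a s' * (γ * V s')) := by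
          simp only [hsplit, Finset.sum_sub_distrib]
      _ = (∑ s, ∑ a, ρ t s * π s a * Rhat s a)
          + (∑ s, ∑ a, ρ t s * π s a * (∑ s', That s a s' * (γ * V s')))
          - ∑ s, ∑ a, ρ t s * π s a * (R s a + ∑ s', T s a s' * (γ * V s')) := by
          simp only [Finset.sum_add_distrib]
      _ = rew That Rhat π μ₀ t + γ * (∑ s', ρ (t + 1) s' * V s') - ∑ s, ρ t s * V s := by
          rw [piece1, piece2, piece3]
  -- Step C : telescoping sum
  have hηbd : ∀ t, |∑ s, ρ t s * V s| ≤ ∑ s, |V s| := by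
    intro t
    calc |∑ s, ρ t s * V s| ≤ ∑ s, |ρ t s * V s| := Finset.abs_sum_le_sum_abs _ _
      _ ≤ ∑ s, |V s| := by
        refine Finset.sum_le_sum fun s _ => ?_
        rw [abs_mul, abs_of_nonneg (hρ0 t s)]
        calc ρ t s * |V s| ≤ 1 * |V s| :=
              mul_le_mul_of_nonneg_right (hρle t s) (abs_nonneg _)
          _ = |V s| := one_mul _
  have hg : Summable (fun t => γ ^ t * ∑ s, ρ t s * V s) := summable_geom_mul hγ0 hγ1 hηbd
  have hgs : Summable (fun t => γ ^ (t + 1) * ∑ s, ρ (t + 1) s * V s) := by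
    have hbd : ∀ t, |γ * ∑ s, ρ (t + 1) s * V s| ≤ γ * ∑ s, |V s| := by
      intro t
      rw [abs_mul, abs_of_nonneg hγ0]
      exact mul_le_mul_of_nonneg_left (hηbd (t + 1)) hγ0
    exact (summable_geom_mul hγ0 hγ1 hbd).congr fun t => by ring
  have hr : Summable (fun t => γ ^ t * rew That Rhat π μ₀ t) :=
    summable_rew That Rhat π μ₀ hThat0 hThat1 hπ0 hπ1 hμ0 hμ1 hγ0 hγ1
  have e3 : (∑' t, γ ^ t * rew That Rhat π μ₀ t) = expReturn That Rhat γ π μ₀ :=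
    (expReturn_eq_tsum That Rhat π μ₀ hThat0 hThat1 hπ0 hπ1 hμ0 hμ1 hγ0 hγ1).symm
  have e4 : (γ : ℝ) ^ 0 * ∑ s, ρ 0 s * V s = expReturn T R γ π μ₀ := by
    rw [pow_zero, one_mul, hV, hρ]
    show (∑ s, stateDist That π μ₀ 0 s * valueFn T R γ π s) = expReturn T R γ π μ₀
    simp only [stateDist]
    rfl
  rw [stepA]
  calc (∑' t, γ ^ t * ∑ s, ∑ a, ρ t s * π s a * G s a)
      = ∑' t, (γ ^ t * rew That Rhat π μ₀ t
          + (γ ^ (t + 1) * ∑ s, ρ (t + 1) s * V s - γ ^ t * ∑ s, ρ t s * V s)) := by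
        refine tsum_congr fun t => ?_
        rw [stepB t]; ring
    _ = (∑' t, γ ^ t * rew That Rhat π μ₀ t)
        + ∑' t, (γ ^ (t + 1) * ∑ s, ρ (t + 1) s * V s - γ ^ t * ∑ s, ρ t s * V s) :=
        Summable.tsum_add hr (hgs.sub hg)
    _ = expReturn That Rhat γ π μ₀ - expReturn T R γ π μ₀ := by
        rw [Summable.tsum_sub hgs hg, e3, Summable.tsum_eq_zero_add hg, e4]
        ring
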